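/- Let k be an odd positive integer with k ≥ 3, i a positive integer with gcd(i,k) = 1, t a natural number with 0 ≤ t ≤ k−1, e = (2^i + 1)·2^t, and F = GaloisField 2 k. Define V : F × F → F × F by V(x,y) = ((x + y)^e + x^e, (x + y)^e + y^e), with components V₁, V₂, and for a, b, c, d ∈ F let W((a,b),(c,d)) = Σ_{x,y ∈ F} χ(Tr(c·V₁(x,y) + d·V₂(x,y) + a·x + b·y)). Then the maximum of |W((a,b),(c,d))| over all a, b ∈ F and (c,d) ≠ (0,0) equals 2^(k+1); equivalently, the nonlinearity of V, namely 2^(2k−1) − (1/2)·max |W|, equals 2^(2k−1) − 2^k. -/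

import Mathlib

noncomputable instance (k : ℕ) : Fintype (GaloisField 2 k) := Fintype.ofFinite _

/-- The absolute trace `Tr(x) = x + x^2 + ⋯ + x^(2^(k-1))` of `GaloisField 2 k`,
computed inside the field (its values lie in the prime subfield `{0, 1}`). -/
noncomputable def absTrace (k : ℕ) (x : GaloisField 2 k) : GaloisField 2 k :=
  ∑ j ∈ Finset.range k, x ^ 2 ^ j

/-- The Walsh transform `W((a,b),(c,d)) = Σ_{x,y} χ(Tr(c·V₁(x,y) + d·V₂(x,y) + ax + by))`
of the closed butterfly with trivial coefficient,
`V(x,y) = ((x+y)^e + x^e, (x+y)^e + y^e)`, where `χ(0) = 1` and `χ(1) = -1`. -/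
noncomputable def butterflyWalshOne (k e : ℕ) (a b c d : GaloisField 2 k) : ℤ :=
  haveI := Classical.decEq (GaloisField 2 k)
  ∑ x : GaloisField 2 k, ∑ y : GaloisField 2 k,
    if absTrace k (c * ((x + y) ^ e + x ^ e) + d * ((x + y) ^ e + y ^ e)
        + a * x + b * y) = 0 then 1 else -1

namespace BFly

variable {k : ℕ}

local notation "F" => GaloisField 2 k

noncomputable local instance : DecidableEq (GaloisField 2 k) := Classical.decEq _

lemma two_zero : (2 : F) = 0 := by
  have := CharP.cast_eq_zero F 2
  exact_mod_cast this

lemma card_F (hk0 : k ≠ 0) : Fintype.card F = 2 ^ k := by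
  rw [← Nat.card_eq_fintype_card]; exact GaloisField.card 2 k hk0

lemma pow_card (hk0 : k ≠ 0) (x : F) : x ^ 2 ^ k = x := by
  rw [← card_F hk0]; exact FiniteField.pow_card x

lemma pow_card_mul (hk0 : k ≠ 0) (m : ℕ) (x : F) : x ^ 2 ^ (k * m) = x := by
  induction m with
  | zero => simp
  | succ n ih =>
      have : k * (n + 1) = k * n + k := by ring
      rw [this, pow_add, pow_mul, ih, pow_card hk0]

/-- `(x^(2^j))^(2^j') = x` whenever `j + j'` is a multiple of `k`. -/
lemma pow_pow_eq (hk0 : k ≠ 0) {j j' m : ℕ} (h : j + j' = k * m) (x : F) :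
    (x ^ 2 ^ j) ^ 2 ^ j' = x := by
  rw [← pow_mul, ← pow_add, h, pow_card_mul hk0]

lemma trace_add (x y : F) : absTrace k (x + y) = absTrace k x + absTrace k y := by
  unfold absTrace
  rw [← Finset.sum_add_distrib]
  exact Finset.sum_congr rfl fun j _ => add_pow_char_pow x y 2 j

lemma trace_zero : absTrace k 0 = 0 := by
  unfold absTrace
  apply Finset.sum_eq_zero
  intro j _
  exact zero_pow (pow_ne_zero j two_ne_zero)

lemma trace_sq (hk0 : k ≠ 0) (x : F) : absTrace k (x ^ 2) = absTrace k x := by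
  unfold absTrace
  have h1 : ∀ j, (x ^ 2) ^ 2 ^ j = x ^ 2 ^ (j + 1) := by
    intro j; rw [← pow_mul, pow_succ']
  have h2 : ∑ j ∈ Finset.range k, (x ^ 2) ^ 2 ^ j = ∑ j ∈ Finset.range k, x ^ 2 ^ (j + 1) :=
    Finset.sum_congr rfl fun j _ => h1 j
  rw [h2]
  have h3 : ∑ j ∈ Finset.range (k + 1), x ^ 2 ^ j
      = (∑ j ∈ Finset.range k, x ^ 2 ^ (j + 1)) + x ^ 2 ^ 0 := Finset.sum_range_succ' _ _
  have h4 : ∑ j ∈ Finset.range (k + 1), x ^ 2 ^ j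
      = (∑ j ∈ Finset.range k, x ^ 2 ^ j) + x ^ 2 ^ k := Finset.sum_range_succ _ _
  have h5 : x ^ 2 ^ k = x ^ 2 ^ 0 := by rw [pow_card hk0]; simp
  have h6 := h3.symm.trans h4
  rw [h5] at h6
  linear_combination h6


lemma trace_frob_pow (hk0 : k ≠ 0) (j : ℕ) (x : F) : absTrace k (x ^ 2 ^ j) = absTrace k x := by
  induction j with
  | zero => simp
  | succ n ih =>
      have h : x ^ 2 ^ (n + 1) = (x ^ 2 ^ n) ^ 2 := by rw [← pow_mul, pow_succ]
      rw [h, trace_sq hk0, ih]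

lemma trace_zero_or_one (hk0 : k ≠ 0) (x : F) : absTrace k x = 0 ∨ absTrace k x = 1 := by
  have h : absTrace k x ^ 2 = absTrace k x := by
    have h1 : absTrace k x ^ 2 = absTrace k (x ^ 2) := by
      unfold absTrace
      have := map_sum (frobenius F 2) (fun j => x ^ 2 ^ j) (Finset.range k)
      simp only [frobenius_def] at this
      rw [this]
      apply Finset.sum_congr rfl
      intro j _
      rw [← pow_mul, ← pow_mul, mul_comm]
    rw [h1, trace_sq hk0]
  have h2 : absTrace k x * (absTrace k x - 1) = 0 := by linear_combination h
  rcases mul_eq_zero.mp h2 with h3 | h3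
  · exact Or.inl h3
  · exact Or.inr (by linear_combination h3)

lemma trace_one (hk0 : k ≠ 0) (hk : Odd k) : absTrace k (1 : F) = 1 := by
  unfold absTrace
  simp only [one_pow]
  rw [Finset.sum_const, Finset.card_range, nsmul_eq_mul, mul_one]
  obtain ⟨j, hj⟩ := hk
  rw [hj]
  rw [Nat.cast_add, Nat.cast_mul, Nat.cast_ofNat, Nat.cast_one, two_zero]
  ring

/-- The character `χ(s) = (-1)^(Tr s)`. -/
noncomputable def chi (k : ℕ) (s : GaloisField 2 k) : ℤ :=
  haveI := Classical.decEq (GaloisField 2 k)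
  if absTrace k s = 0 then 1 else -1

lemma chi_congr {s t : F} (h : absTrace k s = absTrace k t) : chi k s = chi k t := by
  unfold chi; rw [h]

lemma chi_zero : chi k (0 : F) = 1 := by
  unfold chi; rw [if_pos trace_zero]

lemma chi_add (hk0 : k ≠ 0) (s t : F) : chi k (s + t) = chi k s * chi k t := by
  classical
  unfold chi
  rw [trace_add]
  rcases trace_zero_or_one hk0 s with hs | hs <;> rcases trace_zero_or_one hk0 t with ht | ht <;>
    rw [hs, ht]
  · simp
  · simp
  · simp
  · rw [if_pos (by linear_combination two_zero : (1:F)+1 = 0), if_neg one_ne_zero]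
    ring

lemma abs_chi (s : F) : |chi k s| = 1 := by
  unfold chi
  split <;> simp


lemma chi_one (hk0 : k ≠ 0) (hk : Odd k) : chi k (1 : F) = -1 := by
  unfold chi
  rw [trace_one hk0 hk, if_neg one_ne_zero]

lemma sum_chi_zero (hk0 : k ≠ 0) (hk : Odd k) {θ : F} (hθ : θ ≠ 0) :
    ∑ x : F, chi k (x * θ) = 0 := by
  have key : ∀ x : F, chi k ((x + θ⁻¹) * θ) = - chi k (x * θ) := by
    intro x
    have h1 : (x + θ⁻¹) * θ = x * θ + 1 := by field_simp
    rw [h1, chi_add hk0, chi_one hk0 hk]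
    ring
  have h2 : ∑ x : F, chi k ((x + θ⁻¹) * θ) = ∑ y : F, chi k (y * θ) :=
    Fintype.sum_equiv (Equiv.addRight θ⁻¹) _ _ (fun x => rfl)
  have h3 : ∑ x : F, chi k ((x + θ⁻¹) * θ) = - ∑ x : F, chi k (x * θ) := by
    rw [← Finset.sum_neg_distrib]
    exact Finset.sum_congr rfl fun x _ => key x
  have := h2.symm.trans h3
  linarith

lemma sum_chi (hk0 : k ≠ 0) (hk : Odd k) (θ : F) :
    ∑ x : F, chi k (x * θ) = if θ = 0 then (2 ^ k : ℤ) else 0 := by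
  split
  · next h =>
      subst h
      have : ∀ x : F, chi k (x * 0) = 1 := fun x => by rw [mul_zero, chi_zero]
      rw [Finset.sum_congr rfl fun x _ => this x, Finset.sum_const, Finset.card_univ,
        card_F hk0]
      simp
  · next h => exact sum_chi_zero hk0 hk h


/-! ### Frobenius inverse and the linear map L -/

/-- Inverse exponent for the Frobenius power `2^i`. -/
def iinv (k i : ℕ) : ℕ := k * (i + 1) - i

lemma iinv_add (hk0 : k ≠ 0) (i : ℕ) : i + iinv k i = k * (i + 1) := by
  have h : i + 1 ≤ k * (i + 1) := Nat.le_mul_of_pos_left _ (Nat.pos_of_ne_zero hk0)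
  unfold iinv; omega

lemma pow_sigma_iinv (hk0 : k ≠ 0) (i : ℕ) (x : F) : (x ^ 2 ^ i) ^ 2 ^ iinv k i = x :=
  pow_pow_eq hk0 (iinv_add hk0 i) x

lemma pow_iinv_sigma (hk0 : k ≠ 0) (i : ℕ) (x : F) : (x ^ 2 ^ iinv k i) ^ 2 ^ i = x :=
  pow_pow_eq hk0 (by rw [Nat.add_comm]; exact iinv_add hk0 i) x

/-- `L γ w` with `Tr(γ(x^σ w + x w^σ)) = Tr(x · L γ w)`. -/
noncomputable def Lmap (k i : ℕ) (γ w : GaloisField 2 k) : GaloisField 2 k :=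
  (γ * w) ^ 2 ^ iinv k i + γ * w ^ 2 ^ i

lemma tr_part (hk0 : k ≠ 0) (i : ℕ) (γ x u : F) :
    absTrace k (γ * (x ^ 2 ^ i * u + x * u ^ 2 ^ i)) = absTrace k (x * Lmap k i γ u) := by
  have h1 : γ * (x ^ 2 ^ i * u + x * u ^ 2 ^ i)
      = γ * x ^ 2 ^ i * u + x * (γ * u ^ 2 ^ i) := by ring
  rw [h1, trace_add]
  unfold Lmap
  rw [mul_add, trace_add]
  congr 1
  have h2 : (γ * x ^ 2 ^ i * u) ^ 2 ^ iinv k i = x * (γ * u) ^ 2 ^ iinv k i := by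
    rw [mul_pow, mul_pow, pow_sigma_iinv hk0, mul_pow]; ring
  rw [← trace_frob_pow hk0 (iinv k i) (γ * x ^ 2 ^ i * u), h2]

lemma pow_two_pow_two (x : F) (i : ℕ) : (x ^ 2 ^ i) ^ 2 ^ i = x ^ 2 ^ (2 * i) := by
  rw [← pow_mul, ← pow_add, two_mul]

lemma Lmap_pow_sigma (hk0 : k ≠ 0) (i : ℕ) (γ w : F) :
    (Lmap k i γ w) ^ 2 ^ i = γ * w + γ ^ 2 ^ i * w ^ 2 ^ (2 * i) := by
  unfold Lmap
  rw [add_pow_char_pow (p := 2), pow_iinv_sigma hk0, mul_pow, pow_two_pow_two]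

lemma pow_e_add (i : ℕ) (z w : F) :
    (z + w) ^ (2 ^ i + 1)
      = z ^ (2 ^ i + 1) + w ^ (2 ^ i + 1) + (z ^ 2 ^ i * w + z * w ^ 2 ^ i) := by
  rw [pow_succ, pow_succ, pow_succ, add_pow_char_pow (p := 2)]
  ring


/-! ### Reduction of `x ↦ x^(2^(2i))`-linearity to `x ↦ x^2`-linearity -/

lemma exists_m (hk2 : 2 ≤ k) {i : ℕ} (hcop : Nat.Coprime (2 * i) k) :
    ∃ m n' : ℕ, 2 * i * (m + 1) = k * n' + 1 := by
  haveI : NeZero k := ⟨by omega⟩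
  have h1 : ((2 * i : ℕ) : ZMod k) * ((2 * i : ℕ) : ZMod k)⁻¹ = 1 :=
    ZMod.coe_mul_inv_eq_one _ hcop
  set m₀ : ℕ := (((2 * i : ℕ) : ZMod k))⁻¹.val with hm₀
  have h2 : (((2 * i * m₀ : ℕ)) : ZMod k) = ((1 : ℕ) : ZMod k) := by
    push_cast
    rw [hm₀, ZMod.natCast_val, ZMod.cast_id]
    exact_mod_cast h1
  have h3 : 2 * i * m₀ % k = 1 % k := (ZMod.natCast_eq_natCast_iff _ _ _).mp h2
  have h4 : 1 % k = 1 := Nat.one_mod_eq_one.mpr (by omega)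
  rw [h4] at h3
  have h5 : m₀ ≠ 0 := by
    intro h; rw [h, Nat.mul_zero, Nat.zero_mod] at h3; omega
  refine ⟨m₀ - 1, 2 * i * m₀ / k, ?_⟩
  have h6 : m₀ - 1 + 1 = m₀ := by omega
  rw [h6]
  have := Nat.div_add_mod (2 * i * m₀) k
  omega

lemma iterate1 (hk0 : k ≠ 0) (i : ℕ) : ∀ (n : ℕ) (u : F), u ^ 2 ^ (2 * i) = u →
    u ^ 2 ^ (2 * i * (n + 1)) = u := by
  intro n
  induction n with
  | zero => intro u h; simpa using h
  | succ n ih =>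
      intro u h
      have h1 : 2 * i * (n + 1 + 1) = 2 * i * (n + 1) + 2 * i := by ring
      rw [h1, pow_add, pow_mul, ih u h, h]

lemma sq_of_pow_eq (hk2 : 2 ≤ k) {i : ℕ} (hcop : Nat.Coprime (2 * i) k) {u : F}
    (h : u ^ 2 ^ (2 * i) = u) : u ^ 2 = u := by
  have hk0 : k ≠ 0 := by omega
  obtain ⟨m, n', hm⟩ := exists_m hk2 hcop
  have h1 : u ^ 2 ^ (2 * i * (m + 1)) = u := iterate1 hk0 i m u h
  rw [hm, pow_succ, pow_mul, pow_card_mul hk0] at h1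
  exact h1

lemma iterate2 (hk0 : k ≠ 0) (i : ℕ) (p₁ q₁ r₁ s₁ : F) : ∀ n : ℕ, ∃ p q r s : F,
    ∀ u v : F, u ^ 2 ^ (2 * i) = p₁ * u + q₁ * v → v ^ 2 ^ (2 * i) = r₁ * u + s₁ * v →
      u ^ 2 ^ (2 * i * (n + 1)) = p * u + q * v ∧ v ^ 2 ^ (2 * i * (n + 1)) = r * u + s * v := by
  intro n
  induction n with
  | zero => exact ⟨p₁, q₁, r₁, s₁, fun u v h1 h2 => by
      constructor
      · calc u ^ 2 ^ (2 * i * (0 + 1)) = u ^ 2 ^ (2 * i) := by norm_num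
          _ = p₁ * u + q₁ * v := h1
      · calc v ^ 2 ^ (2 * i * (0 + 1)) = v ^ 2 ^ (2 * i) := by norm_num
          _ = r₁ * u + s₁ * v := h2⟩
  | succ n ih =>
      obtain ⟨p, q, r, s, hpq⟩ := ih
      refine ⟨p ^ 2 ^ (2 * i) * p₁ + q ^ 2 ^ (2 * i) * r₁,
              p ^ 2 ^ (2 * i) * q₁ + q ^ 2 ^ (2 * i) * s₁,
              r ^ 2 ^ (2 * i) * p₁ + s ^ 2 ^ (2 * i) * r₁,
              r ^ 2 ^ (2 * i) * q₁ + s ^ 2 ^ (2 * i) * s₁, ?_⟩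
      intro u v h1 h2
      obtain ⟨hu, hv⟩ := hpq u v h1 h2
      have key : ∀ w : F, w ^ 2 ^ (2 * i * (n + 1 + 1)) = (w ^ 2 ^ (2 * i * (n + 1))) ^ 2 ^ (2 * i) := by
        intro w
        have hexp : 2 * i * (n + 1 + 1) = 2 * i * (n + 1) + 2 * i := by ring
        rw [hexp, pow_add, pow_mul]
      constructor
      · calc u ^ 2 ^ (2 * i * (n + 1 + 1)) = (u ^ 2 ^ (2 * i * (n + 1))) ^ 2 ^ (2 * i) := key u
          _ = (p * u + q * v) ^ 2 ^ (2 * i) := by rw [hu]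
          _ = p ^ 2 ^ (2 * i) * (p₁ * u + q₁ * v) + q ^ 2 ^ (2 * i) * (r₁ * u + s₁ * v) := by
              rw [add_pow_char_pow (p := 2), mul_pow, mul_pow, h1, h2]
          _ = (p ^ 2 ^ (2 * i) * p₁ + q ^ 2 ^ (2 * i) * r₁) * u
              + (p ^ 2 ^ (2 * i) * q₁ + q ^ 2 ^ (2 * i) * s₁) * v := by ring
      · calc v ^ 2 ^ (2 * i * (n + 1 + 1)) = (v ^ 2 ^ (2 * i * (n + 1))) ^ 2 ^ (2 * i) := key v
          _ = (r * u + s * v) ^ 2 ^ (2 * i) := by rw [hv]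
          _ = r ^ 2 ^ (2 * i) * (p₁ * u + q₁ * v) + s ^ 2 ^ (2 * i) * (r₁ * u + s₁ * v) := by
              rw [add_pow_char_pow (p := 2), mul_pow, mul_pow, h1, h2]
          _ = (r ^ 2 ^ (2 * i) * p₁ + s ^ 2 ^ (2 * i) * r₁) * u
              + (r ^ 2 ^ (2 * i) * q₁ + s ^ 2 ^ (2 * i) * s₁) * v := by ring

lemma sq_lin_of_pow (hk2 : 2 ≤ k) {i : ℕ} (hcop : Nat.Coprime (2 * i) k) (p₁ q₁ r₁ s₁ : F) :
    ∃ p q r s : F, ∀ u v : F,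
      u ^ 2 ^ (2 * i) = p₁ * u + q₁ * v → v ^ 2 ^ (2 * i) = r₁ * u + s₁ * v →
      u ^ 2 = p * u + q * v ∧ v ^ 2 = r * u + s * v := by
  have hk0 : k ≠ 0 := by omega
  obtain ⟨m, n', hm⟩ := exists_m hk2 hcop
  obtain ⟨p, q, r, s, hpq⟩ := iterate2 hk0 i p₁ q₁ r₁ s₁ m
  refine ⟨p, q, r, s, fun u v h1 h2 => ?_⟩
  obtain ⟨hu, hv⟩ := hpq u v h1 h2
  rw [hm, pow_succ, pow_mul, pow_card_mul hk0] at hu hv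
  exact ⟨hu, hv⟩

/-! ### Nonvanishing of `c² + cd + d²` for `k` odd -/

lemma coprime_three (hk : Odd k) : Nat.Coprime 3 (2 ^ k - 1) := by
  obtain ⟨j, hj⟩ := hk
  have h4 : 4 ^ j % 3 = 1 := by
    rw [Nat.pow_mod]
    simp
  have h2k : 2 ^ k % 3 = 2 := by
    rw [hj, pow_add, pow_mul]
    norm_num
    rw [Nat.mul_mod, h4]
  have hpos : 1 ≤ 2 ^ k := Nat.one_le_two_pow
  have h1 : (2 ^ k - 1) % 3 = 1 := by omega
  unfold Nat.Coprime
  rw [Nat.gcd_rec, h1]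
  rfl

lemma delta_ne (hk0 : k ≠ 0) (hk : Odd k) {c d : F} (hcd : ¬(c = 0 ∧ d = 0)) :
    c * c + c * d + d * d ≠ 0 := by
  intro h
  by_cases hd : d = 0
  · rw [hd] at h
    simp only [mul_zero, zero_mul, add_zero] at h
    exact hcd ⟨mul_self_eq_zero.mp h, hd⟩
  · set r := c * d⁻¹ with hrdef
    have hd2 : d * d ≠ 0 := mul_ne_zero hd hd
    have hdd : d * d⁻¹ = 1 := mul_inv_cancel₀ hd
    have hr : r * r + r + 1 = 0 := by
      rw [hrdef]
      linear_combination d⁻¹ * d⁻¹ * h - c * d⁻¹ * hdd - (d * d⁻¹ + 1) * hdd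
    have hr1 : r ≠ 1 := by
      intro h1
      rw [h1] at hr
      have : (1 : F) = 0 := by linear_combination hr - two_zero
      exact one_ne_zero this
    have hr0 : r ≠ 0 := by
      intro h0
      rw [h0] at hr
      simp at hr
    have h3 : r ^ 3 = 1 := by linear_combination (r - 1) * hr
    have hcard : r ^ (2 ^ k - 1) = 1 := by
      rw [← card_F hk0]
      exact FiniteField.pow_card_sub_one_eq_one r hr0
    have ho3 : orderOf r ∣ 3 := orderOf_dvd_of_pow_eq_one h3
    have hoc : orderOf r ∣ 2 ^ k - 1 := orderOf_dvd_of_pow_eq_one hcard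
    have hdvd : orderOf r ∣ 1 := by
      have := Nat.dvd_gcd ho3 hoc
      rwa [coprime_three hk] at this
    have : r = 1 := orderOf_eq_one_iff.mp (Nat.dvd_one.mp hdvd)
    exact hr1 this


/-! ### The radical of the quadratic form -/

noncomputable def th1 (k i : ℕ) (c d : GaloisField 2 k) (w : GaloisField 2 k × GaloisField 2 k) :
    GaloisField 2 k := Lmap k i (c + d) (w.1 + w.2) + Lmap k i c w.1

noncomputable def th2 (k i : ℕ) (c d : GaloisField 2 k) (w : GaloisField 2 k × GaloisField 2 k) :
    GaloisField 2 k := Lmap k i (c + d) (w.1 + w.2) + Lmap k i d w.2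

/-- A generic 2×2 linear-system solution. -/
lemma solve2 {K : Type*} [Field K] (M11 M12 M21 M22 X Y A B : K)
    (h1 : M11 * A + M12 * B = X) (h2 : M21 * A + M22 * B = Y)
    (hdet : M11 * M22 - M12 * M21 ≠ 0) :
    A = (M22 * X - M12 * Y) / (M11 * M22 - M12 * M21) ∧
    B = (M11 * Y - M21 * X) / (M11 * M22 - M12 * M21) := by
  constructor
  · rw [eq_div_iff hdet]
    linear_combination M22 * h1 - M12 * h2
  · rw [eq_div_iff hdet]
    linear_combination M11 * h2 - M21 * h1

lemma rad_sq (hk2 : 2 ≤ k) (hk : Odd k) {i : ℕ} (hcop : Nat.Coprime (2 * i) k)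
    {c d : F} (hcd : ¬(c = 0 ∧ d = 0)) :
    ∃ p q r s : F, ∀ w : GaloisField 2 k × GaloisField 2 k,
      th1 k i c d w = 0 → th2 k i c d w = 0 →
      w.1 ^ 2 = p * w.1 + q * w.2 ∧ w.2 ^ 2 = r * w.1 + s * w.2 := by
  have hk0 : k ≠ 0 := by omega
  set C := c ^ 2 ^ i with hC
  set D := d ^ 2 ^ i with hD
  set G := (c + d) ^ 2 ^ i with hG'
  have hG : G = C + D := by rw [hG', hC, hD]; exact add_pow_char_pow c d 2 i
  have hΔ : c * c + c * d + d * d ≠ 0 := delta_ne hk0 hk hcd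
  have hdet : D * C - G * G ≠ 0 := by
    have hexp : (c * c + c * d + d * d) ^ 2 ^ i = C * C + C * D + D * D := by
      rw [add_pow_char_pow (p := 2), add_pow_char_pow (p := 2), mul_pow, mul_pow, mul_pow,
        ← hC, ← hD]
    have h1 : D * C - G * G = -((c * c + c * d + d * d) ^ 2 ^ i) := by
      rw [hexp, hG]; ring
    rw [h1]
    exact neg_ne_zero.mpr (pow_ne_zero _ hΔ)
  set det := D * C - G * G with hdetdef
  -- the base coefficients
  obtain ⟨p, q, r, s, hfin⟩ := sq_lin_of_pow hk2 hcop
    ((C * d - G * (c + d)) / det) ((C * (c + d) - G * c) / det)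
    ((D * (c + d) - G * d) / det) ((D * c - G * (c + d)) / det)
  refine ⟨p, q, r, s, ?_⟩
  intro w h1 h2
  set A := w.1 ^ 2 ^ (2 * i) with hA
  set B := w.2 ^ 2 ^ (2 * i) with hB
  -- raise the radical equations to the power 2^i
  have hsum : (w.1 + w.2) ^ 2 ^ (2 * i) = A + B := add_pow_char_pow w.1 w.2 2 (2 * i)
  have hE1 : (c + d) * (w.1 + w.2) + G * (A + B) + (c * w.1 + C * A) = 0 := by
    have h1σ : (th1 k i c d w) ^ 2 ^ i = 0 := by rw [h1]; exact zero_pow (by positivity)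
    unfold th1 at h1σ
    rw [add_pow_char_pow (p := 2), Lmap_pow_sigma hk0, Lmap_pow_sigma hk0, hsum] at h1σ
    linear_combination h1σ
  have hE2 : (c + d) * (w.1 + w.2) + G * (A + B) + (d * w.2 + D * B) = 0 := by
    have h2σ : (th2 k i c d w) ^ 2 ^ i = 0 := by rw [h2]; exact zero_pow (by positivity)
    unfold th2 at h2σ
    rw [add_pow_char_pow (p := 2), Lmap_pow_sigma hk0, Lmap_pow_sigma hk0, hsum] at h2σ
    linear_combination h2σ
  have hE1' : D * A + G * B = d * w.1 + (c + d) * w.2 := by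
    linear_combination hE1 - A * hG
      + (-(A * C) - c * w.1 - c * w.2 - d * w.1 - d * w.2) * two_zero
  have hE2' : G * A + C * B = (c + d) * w.1 + c * w.2 := by
    linear_combination hE2 - B * hG
      + (-(B * D) - c * w.1 - c * w.2 - d * w.1 - d * w.2) * two_zero
  obtain ⟨hAv, hBv⟩ := solve2 D G G C (d * w.1 + (c + d) * w.2) ((c + d) * w.1 + c * w.2)
    A B hE1' hE2' hdet
  apply hfin
  · rw [hA] at hAv
    rw [hAv]
    ring
  · rw [hB] at hBv
    rw [hBv]
    ring


/-! ### Counting solutions of the pair of quadratic relations -/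

open Polynomial in
lemma quad_roots_card (sc rc : F) :
    ((X ^ 2 - C sc * X - C rc : F[X]).roots.toFinset.card) ≤ 2 := by
  have hdeg : (X ^ 2 - C sc * X - C rc : F[X]).natDegree ≤ 2 := by
    compute_degree
  have hne : (X ^ 2 - C sc * X - C rc : F[X]) ≠ 0 := by
    intro h
    have hc : (X ^ 2 - C sc * X - C rc : F[X]).coeff 2 = 1 := by
      simp [coeff_X_pow]
    rw [h] at hc
    simp at hc
  calc ((X ^ 2 - C sc * X - C rc : F[X]).roots.toFinset.card)
      ≤ Multiset.card (X ^ 2 - C sc * X - C rc : F[X]).roots := Multiset.toFinset_card_le _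
    _ ≤ (X ^ 2 - C sc * X - C rc : F[X]).natDegree := card_roots' _
    _ ≤ 2 := hdeg

open Polynomial in
lemma card_le_four (p q r s : F) :
    (Finset.univ.filter fun w : GaloisField 2 k × GaloisField 2 k =>
      w.1 ^ 2 = p * w.1 + q * w.2 ∧ w.2 ^ 2 = r * w.1 + s * w.2).card ≤ 4 := by
  by_cases hq : q = 0
  · -- w.1 ∈ {0, p}, and w.2 is a root of a quadratic depending on w.1
    subst hq
    apply le_trans (Finset.card_le_card
      (show _ ⊆ (({0, p} : Finset (GaloisField 2 k)).biUnion fun u =>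
        ((X ^ 2 - C s * X - C (r * u) : F[X]).roots.toFinset).image fun v => (u, v)) from ?_))
    · calc (({0, p} : Finset (GaloisField 2 k)).biUnion fun u =>
            ((X ^ 2 - C s * X - C (r * u) : F[X]).roots.toFinset).image fun v => (u, v)).card
          ≤ ∑ u ∈ ({0, p} : Finset (GaloisField 2 k)),
              (((X ^ 2 - C s * X - C (r * u) : F[X]).roots.toFinset).image fun v => (u, v)).card :=
            Finset.card_biUnion_le
        _ ≤ ∑ u ∈ ({0, p} : Finset (GaloisField 2 k)), 2 := by
            apply Finset.sum_le_sum
            intro u _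
            exact le_trans (Finset.card_image_le) (quad_roots_card s (r * u))
        _ ≤ 4 := by
            rw [Finset.sum_const, smul_eq_mul]
            have : ({0, p} : Finset (GaloisField 2 k)).card ≤ 2 := Finset.card_insert_le _ _ |>.trans (by simp)
            omega
    · intro w hw
      rw [Finset.mem_filter] at hw
      obtain ⟨-, hw1, hw2⟩ := hw
      rw [Finset.mem_biUnion]
      refine ⟨w.1, ?_, ?_⟩
      · have h0 : w.1 * (w.1 - p) = 0 := by linear_combination hw1
        rcases mul_eq_zero.mp h0 with h | h
        · simp [h]
        · have : w.1 = p := by linear_combination h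
          simp [this]
      · rw [Finset.mem_image]
        refine ⟨w.2, ?_, rfl⟩
        have hne2 : (X ^ 2 - C s * X - C (r * w.1) : F[X]) ≠ 0 := by
          intro h
          have hc : (X ^ 2 - C s * X - C (r * w.1) : F[X]).coeff 2 = 1 := by
            simp [coeff_X_pow]
          rw [h] at hc
          simp at hc
        rw [Multiset.mem_toFinset, mem_roots hne2, IsRoot.def]
        simp only [eval_sub, eval_mul, eval_pow, eval_X, eval_C]
        linear_combination hw2
  · -- w.1 is a root of an explicit quartic, and w.2 is determined by w.1
    set P : F[X] := (X ^ 2 - C p * X) ^ 2 - C (s * q) * (X ^ 2 - C p * X) - C (r * q ^ 2) * X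
      with hP
    have hdeg : P.natDegree ≤ 4 := by
      rw [hP]
      compute_degree
    have hdeg4 : P.natDegree = 4 := by
      rw [hP]
      compute_degree!
    have hne : P ≠ 0 := by
      intro h
      rw [h, natDegree_zero] at hdeg4
      exact (by norm_num : (0 : ℕ) ≠ 4) hdeg4
    apply le_trans (Finset.card_le_card_of_injOn (fun w => w.1)
      (fun w hw => ?_) (fun w hw w' hw' hww' => ?_))
    · calc P.roots.toFinset.card ≤ Multiset.card P.roots := Multiset.toFinset_card_le _
        _ ≤ P.natDegree := card_roots' _
        _ ≤ 4 := hdeg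
    · rw [Finset.mem_coe, Finset.mem_filter] at hw
      obtain ⟨-, hw1, hw2⟩ := hw
      rw [Finset.mem_coe, Multiset.mem_toFinset, mem_roots hne, IsRoot.def, hP]
      simp only [eval_sub, eval_mul, eval_pow, eval_X, eval_C]
      linear_combination (w.1 ^ 2 - p * w.1 + q * w.2 - s * q) * hw1 + q ^ 2 * hw2
    · rw [Finset.mem_coe, Finset.mem_filter] at hw hw'
      obtain ⟨-, h1, -⟩ := hw
      obtain ⟨-, h1', -⟩ := hw'
      simp only at hww'
      have hv : q * w.2 = q * w'.2 := by
        rw [← hww'] at h1'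
        linear_combination h1' - h1
      have := mul_left_cancel₀ hq hv
      exact Prod.ext hww' this


/-! ### The Walsh sum -/

noncomputable def gfun (k e : ℕ) (a b c d : GaloisField 2 k)
    (z : GaloisField 2 k × GaloisField 2 k) : GaloisField 2 k :=
  c * ((z.1 + z.2) ^ e + z.1 ^ e) + d * ((z.1 + z.2) ^ e + z.2 ^ e) + a * z.1 + b * z.2

lemma W_eq (e : ℕ) (a b c d : F) :
    butterflyWalshOne k e a b c d
      = ∑ z : GaloisField 2 k × GaloisField 2 k, chi k (gfun k e a b c d z) := by
  unfold butterflyWalshOne gfun chi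
  rw [Fintype.sum_prod_type]

lemma g_diff (i : ℕ) (a b c d : F) (z w : GaloisField 2 k × GaloisField 2 k) :
    gfun k (2 ^ i + 1) a b c d z + gfun k (2 ^ i + 1) a b c d (z + w)
      = gfun k (2 ^ i + 1) a b c d w
        + ((c + d) * ((z.1 + z.2) ^ 2 ^ i * (w.1 + w.2) + (z.1 + z.2) * (w.1 + w.2) ^ 2 ^ i)
           + c * (z.1 ^ 2 ^ i * w.1 + z.1 * w.1 ^ 2 ^ i)
           + d * (z.2 ^ 2 ^ i * w.2 + z.2 * w.2 ^ 2 ^ i)) := by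
  unfold gfun
  simp only [Prod.fst_add, Prod.snd_add]
  have h1 : z.1 + w.1 + (z.2 + w.2) = (z.1 + z.2) + (w.1 + w.2) := by ring
  rw [h1, pow_e_add i (z.1 + z.2) (w.1 + w.2), pow_e_add i z.1 w.1, pow_e_add i z.2 w.2]
  linear_combination ((z.1 + z.2) ^ (2 ^ i + 1) * c + (z.1 + z.2) ^ (2 ^ i + 1) * d
    + z.1 ^ (2 ^ i + 1) * c + z.2 ^ (2 ^ i + 1) * d + a * z.1 + b * z.2) * two_zero

lemma trace_key (hk0 : k ≠ 0) (i : ℕ) (a b c d : F) (z w : GaloisField 2 k × GaloisField 2 k) :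
    absTrace k (gfun k (2 ^ i + 1) a b c d z + gfun k (2 ^ i + 1) a b c d (z + w))
      = absTrace k (gfun k (2 ^ i + 1) a b c d w
          + (z.1 * th1 k i c d w + z.2 * th2 k i c d w)) := by
  rw [g_diff i a b c d z w]
  rw [trace_add, trace_add, trace_add]
  rw [tr_part hk0 i (c + d) (z.1 + z.2) (w.1 + w.2), tr_part hk0 i c z.1 w.1,
    tr_part hk0 i d z.2 w.2]
  unfold th1 th2
  rw [trace_add, trace_add]
  rw [mul_add z.1, trace_add, mul_add z.2, trace_add]
  rw [add_mul z.1 z.2, trace_add]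
  ring

lemma chi_key (hk0 : k ≠ 0) (i : ℕ) (a b c d : F) (z w : GaloisField 2 k × GaloisField 2 k) :
    chi k (gfun k (2 ^ i + 1) a b c d z) * chi k (gfun k (2 ^ i + 1) a b c d (z + w))
      = chi k (gfun k (2 ^ i + 1) a b c d w)
        * (chi k (z.1 * th1 k i c d w) * chi k (z.2 * th2 k i c d w)) := by
  rw [← chi_add hk0, ← chi_add hk0, ← chi_add hk0]
  exact chi_congr (trace_key hk0 i a b c d z w)

lemma chi_le_one (s : F) : chi k s ≤ 1 := by
  unfold chi; split <;> norm_num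

lemma Wsq_le (hk2 : 2 ≤ k) (hk : Odd k) {i : ℕ} (hcop : Nat.Coprime (2 * i) k)
    (a b c d : F) (hcd : ¬(c = 0 ∧ d = 0)) :
    (butterflyWalshOne k (2 ^ i + 1) a b c d) ^ 2 ≤ 2 ^ (2 * k + 2) := by
  have hk0 : k ≠ 0 := by omega
  have hodd := hk
  set g := gfun k (2 ^ i + 1) a b c d with hg
  -- Step 1: express W² as a double sum over differences
  have h1 : (butterflyWalshOne k (2 ^ i + 1) a b c d) ^ 2
      = ∑ w : GaloisField 2 k × GaloisField 2 k,
          ∑ z : GaloisField 2 k × GaloisField 2 k, chi k (g z) * chi k (g (z + w)) := by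
    rw [W_eq, sq, Finset.sum_mul_sum]
    have h2 : ∀ z : GaloisField 2 k × GaloisField 2 k,
        ∑ z' : GaloisField 2 k × GaloisField 2 k, chi k (g z) * chi k (g z')
          = ∑ w : GaloisField 2 k × GaloisField 2 k, chi k (g z) * chi k (g (z + w)) := by
      intro z
      exact (Fintype.sum_equiv (Equiv.addLeft z)
        (fun w => chi k (g z) * chi k (g (z + w)))
        (fun z' => chi k (g z) * chi k (g z')) (fun w => rfl)).symm
    rw [Finset.sum_congr rfl fun z _ => h2 z]
    exact Finset.sum_comm
  -- Step 2: evaluate the inner sum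
  have h3 : ∀ w : GaloisField 2 k × GaloisField 2 k,
      ∑ z : GaloisField 2 k × GaloisField 2 k, chi k (g z) * chi k (g (z + w))
        = chi k (g w) * ((if th1 k i c d w = 0 then (2 ^ k : ℤ) else 0)
            * (if th2 k i c d w = 0 then (2 ^ k : ℤ) else 0)) := by
    intro w
    calc ∑ z : GaloisField 2 k × GaloisField 2 k, chi k (g z) * chi k (g (z + w))
        = ∑ z : GaloisField 2 k × GaloisField 2 k,
            chi k (g w) * (chi k (z.1 * th1 k i c d w) * chi k (z.2 * th2 k i c d w)) :=
          Finset.sum_congr rfl fun z _ => chi_key hk0 i a b c d z w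
      _ = chi k (g w) * ∑ z : GaloisField 2 k × GaloisField 2 k,
            chi k (z.1 * th1 k i c d w) * chi k (z.2 * th2 k i c d w) := by
          rw [Finset.mul_sum]
      _ = chi k (g w) * ((∑ x : GaloisField 2 k, chi k (x * th1 k i c d w))
            * (∑ y : GaloisField 2 k, chi k (y * th2 k i c d w))) := by
          rw [Fintype.sum_prod_type, Finset.sum_mul_sum]
      _ = chi k (g w) * ((if th1 k i c d w = 0 then (2 ^ k : ℤ) else 0)
            * (if th2 k i c d w = 0 then (2 ^ k : ℤ) else 0)) := by
          rw [sum_chi hk0 hodd, sum_chi hk0 hodd]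
  rw [h1, Finset.sum_congr rfl fun w _ => h3 w]
  -- Step 3: restrict to the radical and bound
  set Rad := Finset.univ.filter
    (fun w : GaloisField 2 k × GaloisField 2 k => th1 k i c d w = 0 ∧ th2 k i c d w = 0)
    with hRad
  have h4 : ∑ w : GaloisField 2 k × GaloisField 2 k,
      chi k (g w) * ((if th1 k i c d w = 0 then (2 ^ k : ℤ) else 0)
        * (if th2 k i c d w = 0 then (2 ^ k : ℤ) else 0))
      = ∑ w ∈ Rad, chi k (g w) * ((if th1 k i c d w = 0 then (2 ^ k : ℤ) else 0)
        * (if th2 k i c d w = 0 then (2 ^ k : ℤ) else 0)) := by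
    symm
    apply Finset.sum_subset (Finset.subset_univ Rad)
    intro w _ hw
    rw [hRad, Finset.mem_filter] at hw
    push_neg at hw
    by_cases hth1 : th1 k i c d w = 0
    · rw [if_neg (hw (Finset.mem_univ w) hth1)]
      ring
    · rw [if_neg hth1]
      ring
  rw [h4]
  have h5 : ∀ w ∈ Rad, chi k (g w) * ((if th1 k i c d w = 0 then (2 ^ k : ℤ) else 0)
      * (if th2 k i c d w = 0 then (2 ^ k : ℤ) else 0)) ≤ 2 ^ k * 2 ^ k := by
    intro w _
    have hpos1 : (0 : ℤ) ≤ (if th1 k i c d w = 0 then (2 ^ k : ℤ) else 0) := by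
      split <;> positivity
    have hpos2 : (0 : ℤ) ≤ (if th2 k i c d w = 0 then (2 ^ k : ℤ) else 0) := by
      split <;> positivity
    have hle1 : (if th1 k i c d w = 0 then (2 ^ k : ℤ) else 0) ≤ 2 ^ k := by
      split
      · exact le_rfl
      · positivity
    have hle2 : (if th2 k i c d w = 0 then (2 ^ k : ℤ) else 0) ≤ 2 ^ k := by
      split
      · exact le_rfl
      · positivity
    calc chi k (g w) * ((if th1 k i c d w = 0 then (2 ^ k : ℤ) else 0)
          * (if th2 k i c d w = 0 then (2 ^ k : ℤ) else 0))
        ≤ (if th1 k i c d w = 0 then (2 ^ k : ℤ) else 0)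
          * (if th2 k i c d w = 0 then (2 ^ k : ℤ) else 0) :=
          mul_le_of_le_one_left (mul_nonneg hpos1 hpos2) (chi_le_one _)
      _ ≤ 2 ^ k * 2 ^ k := mul_le_mul hle1 hle2 hpos2 (by positivity)
  have h6 : Rad.card ≤ 4 := by
    obtain ⟨p, q, r, s, hpqrs⟩ := rad_sq hk2 hk hcop hcd
    have hsub : Rad ⊆ Finset.univ.filter
        (fun w : GaloisField 2 k × GaloisField 2 k =>
          w.1 ^ 2 = p * w.1 + q * w.2 ∧ w.2 ^ 2 = r * w.1 + s * w.2) := by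
      intro w hw
      rw [hRad, Finset.mem_filter] at hw
      rw [Finset.mem_filter]
      exact ⟨Finset.mem_univ w, hpqrs w hw.2.1 hw.2.2⟩
    exact le_trans (Finset.card_le_card hsub) (card_le_four p q r s)
  calc ∑ w ∈ Rad, chi k (g w) * ((if th1 k i c d w = 0 then (2 ^ k : ℤ) else 0)
        * (if th2 k i c d w = 0 then (2 ^ k : ℤ) else 0))
      ≤ ∑ _w ∈ Rad, (2 ^ k * 2 ^ k : ℤ) := Finset.sum_le_sum h5
    _ = Rad.card * (2 ^ k * 2 ^ k : ℤ) := by rw [Finset.sum_const, nsmul_eq_mul]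
    _ ≤ 4 * (2 ^ k * 2 ^ k : ℤ) := by
        apply mul_le_mul_of_nonneg_right _ (by positivity)
        exact_mod_cast h6
    _ = 2 ^ (2 * k + 2) := by
        rw [← pow_add, two_mul]
        ring


/-! ### The value at `a = b = c = d = 1` -/

lemma L1_zero (hk2 : 2 ≤ k) {i : ℕ} (hcop : Nat.Coprime (2 * i) k) {u : F}
    (h : Lmap k i 1 u = 0) : u = 0 ∨ u = 1 := by
  have hk0 : k ≠ 0 := by omega
  have h1 : (Lmap k i 1 u) ^ 2 ^ i = 0 := by rw [h]; exact zero_pow (by positivity)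
  rw [Lmap_pow_sigma hk0] at h1
  have h2 : u ^ 2 ^ (2 * i) = u := by
    simp only [one_mul, one_pow] at h1
    linear_combination h1 - u * two_zero - (u ^ 2 ^ (2 * i)) * two_zero + u ^ 2 ^ (2 * i) * two_zero
  have h3 : u ^ 2 = u := sq_of_pow_eq hk2 hcop h2
  have h4 : u * (u - 1) = 0 := by linear_combination h3
  rcases mul_eq_zero.mp h4 with h5 | h5
  · exact Or.inl h5
  · exact Or.inr (by linear_combination h5)

lemma L1_zero_of (hk0 : k ≠ 0) (i : ℕ) {u : F} (h : u = 0 ∨ u = 1) : Lmap k i 1 u = 0 := by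
  unfold Lmap
  rcases h with h | h <;> rw [h]
  · rw [mul_zero, zero_pow (by positivity), zero_pow (by positivity), mul_zero, add_zero]
  · rw [mul_one, one_pow, one_pow, mul_one]
    linear_combination two_zero

lemma Ssq (hk2 : 2 ≤ k) (hk : Odd k) {i : ℕ} (hcop : Nat.Coprime (2 * i) k) :
    (∑ x : GaloisField 2 k, chi k (x ^ (2 ^ i + 1) + x)) ^ 2 = 2 ^ (k + 1) := by
  have hk0 : k ≠ 0 := by omega
  set S := ∑ x : GaloisField 2 k, chi k (x ^ (2 ^ i + 1) + x) with hS
  have key : ∀ u x : F, chi k (x ^ (2 ^ i + 1) + x) * chi k ((x + u) ^ (2 ^ i + 1) + (x + u))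
      = chi k (u ^ (2 ^ i + 1) + u) * chi k (x * Lmap k i 1 u) := by
    intro u x
    rw [← chi_add hk0]
    have h1 : x ^ (2 ^ i + 1) + x + ((x + u) ^ (2 ^ i + 1) + (x + u))
        = (u ^ (2 ^ i + 1) + u) + 1 * (x ^ 2 ^ i * u + x * u ^ 2 ^ i) := by
      rw [pow_e_add i x u]
      linear_combination (x ^ (2 ^ i + 1) + x) * two_zero
    rw [h1, chi_add hk0]
    congr 1
    exact chi_congr (tr_part hk0 i 1 x u)
  have h2 : S ^ 2 = ∑ u : GaloisField 2 k, chi k (u ^ (2 ^ i + 1) + u)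
      * (if Lmap k i 1 u = 0 then (2 ^ k : ℤ) else 0) := by
    rw [hS, sq, Finset.sum_mul_sum]
    have h3 : ∀ x : F, ∑ x' : GaloisField 2 k,
        chi k (x ^ (2 ^ i + 1) + x) * chi k (x' ^ (2 ^ i + 1) + x')
        = ∑ u : GaloisField 2 k,
            chi k (x ^ (2 ^ i + 1) + x) * chi k ((x + u) ^ (2 ^ i + 1) + (x + u)) := by
      intro x
      exact (Fintype.sum_equiv (Equiv.addLeft x)
        (fun u => chi k (x ^ (2 ^ i + 1) + x) * chi k ((x + u) ^ (2 ^ i + 1) + (x + u)))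
        (fun x' => chi k (x ^ (2 ^ i + 1) + x) * chi k (x' ^ (2 ^ i + 1) + x'))
        (fun u => rfl)).symm
    rw [Finset.sum_congr rfl fun x _ => h3 x, Finset.sum_comm]
    apply Finset.sum_congr rfl
    intro u _
    rw [Finset.sum_congr rfl fun x _ => key u x, ← Finset.mul_sum, sum_chi hk0 hk]
  rw [h2]
  have h4 : ∑ u : GaloisField 2 k, chi k (u ^ (2 ^ i + 1) + u)
      * (if Lmap k i 1 u = 0 then (2 ^ k : ℤ) else 0)
      = ∑ u ∈ ({0, 1} : Finset (GaloisField 2 k)), chi k (u ^ (2 ^ i + 1) + u)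
      * (if Lmap k i 1 u = 0 then (2 ^ k : ℤ) else 0) := by
    symm
    apply Finset.sum_subset (Finset.subset_univ _)
    intro u _ hu
    have : Lmap k i 1 u ≠ 0 := by
      intro h
      rcases L1_zero hk2 hcop h with h | h <;> simp [h] at hu
    rw [if_neg this, mul_zero]
  rw [h4, Finset.sum_pair (zero_ne_one' (GaloisField 2 k))]
  rw [if_pos (L1_zero_of hk0 i (Or.inl rfl)), if_pos (L1_zero_of hk0 i (Or.inr rfl))]
  have h5 : ((0 : F) ^ (2 ^ i + 1) + 0) = 0 := by
    rw [zero_pow (by positivity), add_zero]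
  have h6 : ((1 : F) ^ (2 ^ i + 1) + 1) = 0 := by
    rw [one_pow]; linear_combination two_zero
  rw [h5, h6, chi_zero]
  ring

lemma W1111 (hk2 : 2 ≤ k) (hk : Odd k) {i : ℕ} (hcop : Nat.Coprime (2 * i) k) :
    butterflyWalshOne k (2 ^ i + 1) 1 1 1 1 = 2 ^ (k + 1) := by
  have hk0 : k ≠ 0 := by omega
  rw [W_eq]
  have h1 : ∀ z : GaloisField 2 k × GaloisField 2 k,
      chi k (gfun k (2 ^ i + 1) 1 1 1 1 z)
        = chi k (z.1 ^ (2 ^ i + 1) + z.1) * chi k (z.2 ^ (2 ^ i + 1) + z.2) := by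
    intro z
    rw [← chi_add hk0]
    apply chi_congr
    congr 1
    unfold gfun
    linear_combination ((z.1 + z.2) ^ (2 ^ i + 1)) * two_zero
  rw [Finset.sum_congr rfl fun z _ => h1 z, Fintype.sum_prod_type]
  have h2 := Ssq hk2 hk hcop (i := i)
  rw [sq, Finset.sum_mul_sum] at h2
  exact h2


/-! ### Removing the `2^t` factor from the exponent -/

lemma W_shift (hk0 : k ≠ 0) (q t : ℕ) (a b c d : F) :
    butterflyWalshOne k (q * 2 ^ t) a b c d
      = butterflyWalshOne k q (a ^ 2 ^ t) (b ^ 2 ^ t) c d := by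
  rw [W_eq, W_eq]
  set τ := iinv k t with hτ
  have hφ : Function.Bijective
      (fun z : GaloisField 2 k × GaloisField 2 k => ((z.1 ^ 2 ^ τ, z.2 ^ 2 ^ τ) :
        GaloisField 2 k × GaloisField 2 k)) := by
    rw [Function.bijective_iff_has_inverse]
    refine ⟨fun z => (z.1 ^ 2 ^ t, z.2 ^ 2 ^ t), fun z => ?_, fun z => ?_⟩
    · simp only
      rw [pow_iinv_sigma hk0, pow_iinv_sigma hk0]
    · simp only
      rw [pow_sigma_iinv hk0, pow_sigma_iinv hk0]
  have key : ∀ z : GaloisField 2 k × GaloisField 2 k,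
      chi k (gfun k q (a ^ 2 ^ t) (b ^ 2 ^ t) c d z)
        = chi k (gfun k (q * 2 ^ t) a b c d (z.1 ^ 2 ^ τ, z.2 ^ 2 ^ τ)) := by
    intro z
    apply chi_congr
    unfold gfun
    simp only
    have hpow : ∀ w : F, (w ^ 2 ^ τ) ^ (q * 2 ^ t) = w ^ q := by
      intro w
      rw [mul_comm q, pow_mul, pow_iinv_sigma hk0]
    have hsum : (z.1 ^ 2 ^ τ + z.2 ^ 2 ^ τ) = (z.1 + z.2) ^ 2 ^ τ :=
      (add_pow_char_pow z.1 z.2 2 τ).symm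
    rw [hsum, hpow, hpow, hpow]
    rw [trace_add, trace_add, trace_add, trace_add, trace_add, trace_add]
    congr 1
    · congr 1
      -- Tr(a^(2^t) * z.1) = Tr(a * z.1^(2^τ))
      rw [← trace_frob_pow hk0 t (a * z.1 ^ 2 ^ τ), mul_pow, pow_iinv_sigma hk0]
    · rw [← trace_frob_pow hk0 t (b * z.2 ^ 2 ^ τ), mul_pow, pow_iinv_sigma hk0]
  exact (Fintype.sum_bijective _ hφ
    (fun z => chi k (gfun k q (a ^ 2 ^ t) (b ^ 2 ^ t) c d z))
    (fun z => chi k (gfun k (q * 2 ^ t) a b c d z)) key).symm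

end BFly

/-- For `k ≥ 3` odd, `gcd(i,k) = 1` and exponent `e = (2^i+1)·2^t`, the maximum of
`|W((a,b),(c,d))|` over all `a, b` and `(c,d) ≠ (0,0)` for the closed butterfly with
trivial coefficient `α = 1` equals `2^(k+1)`; equivalently its nonlinearity is
`2^(2k-1) - 2^k`. -/
theorem closedButterfly_trivial_coeff_nonlinearity (k i t : ℕ) (hk : Odd k) (hk3 : 3 ≤ k)
    (hipos : 0 < i) (hgcd : Nat.gcd i k = 1) (ht : t ≤ k - 1) :
    IsGreatest {m : ℤ | ∃ a b c d : GaloisField 2 k, (c, d) ≠ (0, 0) ∧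
        m = |butterflyWalshOne k ((2 ^ i + 1) * 2 ^ t) a b c d|} (2 ^ (k + 1)) ∧
    (2 : ℤ) ^ (2 * k - 1) - (2 ^ (k + 1)) / 2 = 2 ^ (2 * k - 1) - 2 ^ k := by
  have hk0 : k ≠ 0 := by omega
  have hk2 : 2 ≤ k := by omega
  have hcop2 : Nat.Coprime 2 k := (Nat.prime_two.coprime_iff_not_dvd).mpr
    (by have h1 := Nat.odd_iff.mp hk; intro hdvd; omega)
  have hcop : Nat.Coprime (2 * i) k := Nat.Coprime.mul hcop2 hgcd
  constructor
  · constructor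
    · refine ⟨1, 1, 1, 1, ?_, ?_⟩
      · simp [Prod.ext_iff]
      · rw [BFly.W_shift hk0]
        try simp only [one_pow]
        rw [BFly.W1111 hk2 hk hcop, abs_of_nonneg (by positivity)]
    · rintro m ⟨a, b, c, d, hcd, rfl⟩
      rw [BFly.W_shift hk0]
      apply abs_le_of_sq_le_sq _ (by positivity)
      have hcd' : ¬(c = 0 ∧ d = 0) := by
        rintro ⟨hc, hd⟩
        exact hcd (by rw [hc, hd])
      calc (butterflyWalshOne k (2 ^ i + 1) (a ^ 2 ^ t) (b ^ 2 ^ t) c d) ^ 2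
          ≤ (2 : ℤ) ^ (2 * k + 2) := BFly.Wsq_le hk2 hk hcop _ _ c d hcd'
        _ = ((2 : ℤ) ^ (k + 1)) ^ 2 := by
            rw [← pow_mul]
            congr 1
            ring
  · have h : (2 : ℤ) ^ (k + 1) = 2 ^ k * 2 := by rw [pow_succ]
    rw [h, Int.mul_ediv_cancel _ two_ne_zero]
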